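/- Let K ⊆ R^d be a self-dual cone with respect to an inner product ⟨·,·⟩ and H ⊆ R^d a subspace. Then the following are equivalent: (i) span(K ∩ H) = H and K ∩ H is self-dual on its span (i.e., K ∩ H = (K ∩ H)* ∩ H); (ii) π_H(K) = K ∩ H, where π_H is the orthogonal projection onto H with respect to ⟨·,·⟩. -/

import Mathlib

open RealInnerProductSpace

/-- Let `K` be a self-dual closed convex cone in a finite-dimensional real
inner product space and `H` a subspace. Then: (`span(K ∩ H) = H` and `K ∩ H` is
self-dual on its span, i.e. `K ∩ H = (K ∩ H)* ∩ H`) if and only if `π_H(K) = K ∩ H`,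
where `π_H` is the orthogonal projection onto `H`. -/
theorem selfDual_slice_iff_projection
    {V : Type*} [NormedAddCommGroup V] [InnerProductSpace ℝ V] [FiniteDimensional ℝ V]
    (K : Set V) (hKclosed : IsClosed K) (hKconv : Convex ℝ K)
    (hKcone : ∀ (c : ℝ), 0 ≤ c → ∀ x ∈ K, c • x ∈ K)
    (hsd : K = {y : V | ∀ x ∈ K, 0 ≤ ⟪x, y⟫})
    (H : Submodule ℝ V) :
    (Submodule.span ℝ (K ∩ H) = H ∧
        K ∩ H = {y : V | ∀ x ∈ K ∩ H, 0 ≤ ⟪x, y⟫} ∩ H) ↔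
      (fun x => (H.orthogonalProjectionOnto x : V)) '' K = K ∩ H := by
  -- key inner product identity: for y ∈ H, ⟪π x, y⟫ = ⟪x, y⟫
  have key : ∀ (x : V), ∀ y ∈ H, ⟪(H.orthogonalProjectionOnto x : V), y⟫ = ⟪x, y⟫ := by
    intro x y hy
    have h0 : ⟪x - (H.orthogonalProjectionOnto x : V), y⟫ = 0 :=
      H.starProjection_inner_eq_zero x y hy
    rw [inner_sub_left] at h0
    linarith
  constructor
  · rintro ⟨hspan, hself⟩
    apply Set.Subset.antisymm
    · rintro _ ⟨k, hk, rfl⟩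
      have hkdual : ∀ x ∈ K, (0:ℝ) ≤ ⟪x, k⟫ := by
        rw [hsd] at hk; exact hk
      have hmem : (H.orthogonalProjectionOnto k : V) ∈
          {y : V | ∀ x ∈ K ∩ H, 0 ≤ ⟪x, y⟫} ∩ (H : Set V) := by
        refine ⟨fun x hx => ?_, (H.orthogonalProjectionOnto k).2⟩
        have : ⟪x, (H.orthogonalProjectionOnto k : V)⟫ = ⟪(H.orthogonalProjectionOnto k : V), x⟫ :=
          real_inner_comm _ _
        rw [this, key k x hx.2, real_inner_comm]
        exact hkdual x hx.1
      rw [← hself] at hmem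
      exact hmem
    · rintro x ⟨hxK, hxH⟩
      exact ⟨x, hxK, H.starProjection_eq_self_iff.mpr hxH⟩
  · intro hproj
    have hKH_sub : ∀ y ∈ (K ∩ (H : Set V)), y ∈ K := fun y hy => hy.1
    constructor
    · -- span (K ∩ H) = H
      apply le_antisymm
      · rw [Submodule.span_le]; exact fun x hx => hx.2
      · -- first: span ℝ K = ⊤
        have hspanK : Submodule.span ℝ K = ⊤ := by
          rw [← Submodule.orthogonal_eq_bot_iff]
          rw [Submodule.eq_bot_iff]
          intro v hv
          rw [Submodule.mem_orthogonal] at hv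
          have hvK : v ∈ K := by
            rw [hsd]
            intro x hx
            exact le_of_eq (hv x (Submodule.subset_span hx)).symm
          have : ⟪v, v⟫ = 0 := hv v (Submodule.subset_span hvK)
          exact inner_self_eq_zero.mp this
        intro h hh
        set P : V →ₗ[ℝ] V := H.subtype ∘ₗ (H.orthogonalProjectionOnto : V →L[ℝ] H).toLinearMap
          with hP
        have himg : (⇑P) '' K = K ∩ (H : Set V) := by
          rw [← hproj]; rfl
        have hPh : P h = h := by
          simp only [hP, LinearMap.coe_comp, Function.comp_apply, ContinuousLinearMap.coe_coe,
            Submodule.coe_subtype]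
          exact H.starProjection_eq_self_iff.mpr hh
        have : h ∈ Submodule.map P (Submodule.span ℝ K) := by
          rw [hspanK]
          exact ⟨h, trivial, hPh⟩
        rwa [Submodule.map_span, himg] at this
    · -- self-duality of the slice
      apply Set.Subset.antisymm
      · rintro y ⟨hyK, hyH⟩
        refine ⟨fun x hx => ?_, hyH⟩
        rw [hsd] at hyK
        exact hyK x hx.1
      · rintro y ⟨hy, hyH⟩
        have hyK : y ∈ K := by
          rw [hsd]
          intro x hx
          have hπx : (H.orthogonalProjectionOnto x : V) ∈ K ∩ (H : Set V) := by
            rw [← hproj]; exact ⟨x, hx, rfl⟩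
          have h1 : (0:ℝ) ≤ ⟪(H.orthogonalProjectionOnto x : V), y⟫ := hy _ hπx
          rwa [key x y hyH] at h1
        exact ⟨hyK, hyH⟩
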